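/- For every m ∈ ℕ there is a constant C_m such that for all λ ≥ 1 and y > 0, ∫_0^∞ (e^{-2λs}/(1 - e^{-2λ(s+y)}))·(1 + s^m) ds ≤ C_m·(1/λ)·(1 + log(1 + 1/(λy))). -/

import Mathlib

open MeasureTheory Set Real

/-- For every `m ∈ ℕ` there is `C_m` with
`∫_0^∞ e^{-2λs}/(1 - e^{-2λ(s+y)}) (1 + s^m) ds ≤ C_m (1/λ)(1 + log(1 + 1/(λy)))`. -/
theorem tail_integral_estimate (m : ℕ) :
    ∃ C : ℝ, 0 < C ∧ ∀ lam y : ℝ, 1 ≤ lam → 0 < y →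
      (∫ s in Set.Ioi (0 : ℝ),
        Real.exp (-(2 * lam * s)) / (1 - Real.exp (-(2 * lam * (s + y)))) * (1 + s ^ m)) ≤
        C * (1 / lam) * (1 + Real.log (1 + 1 / (lam * y))) := by
  refine ⟨2 * ((m.factorial : ℝ) + 1), by positivity, ?_⟩
  intro lam y hlam hy
  have hlam0 : (0:ℝ) < lam := lt_of_lt_of_le one_pos hlam
  set A : ℝ := (m.factorial : ℝ) + 1 with hA
  have hA0 : (0:ℝ) < A := by positivity
  set L : ℝ := Real.log (1 + 1 / (lam * y)) with hLdef
  have hL0 : 0 ≤ L := Real.log_nonneg (by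
    have : 0 ≤ 1 / (lam * y) := by positivity
    linarith)
  set g : ℝ → ℝ := fun s => A * Real.exp (-(lam * s)) +
    (A / (2 * lam)) * ((Set.Ioc (0:ℝ) (1/lam)).indicator (fun s => 1/(s+y)) s
      + lam * Real.exp (-(lam * s))) with hgdef
  -- integrability
  have hexp : IntegrableOn (fun s : ℝ => Real.exp (-(lam * s))) (Set.Ioi 0) := by
    simpa [neg_mul] using exp_neg_integrableOn_Ioi 0 hlam0
  have hind_on : IntegrableOn (fun s : ℝ => 1/(s+y)) (Set.Ioc 0 (1/lam)) := by
    refine (ContinuousOn.integrableOn_Icc ?_).mono_set Set.Ioc_subset_Icc_self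
    refine ContinuousOn.div continuousOn_const (by fun_prop) ?_
    intro s hs
    have h1 : (0:ℝ) ≤ s := hs.1
    positivity
  have hind : Integrable ((Set.Ioc (0:ℝ) (1/lam)).indicator (fun s : ℝ => 1/(s+y))) :=
    hind_on.integrable_indicator measurableSet_Ioc
  have hsum2 : IntegrableOn (fun s : ℝ =>
      (Set.Ioc (0:ℝ) (1/lam)).indicator (fun s => 1/(s+y)) s + lam * Real.exp (-(lam * s)))
      (Set.Ioi 0) := hind.integrableOn.add (hexp.const_mul lam)
  have hg : IntegrableOn g (Set.Ioi 0) := (hexp.const_mul A).add (hsum2.const_mul _)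
  -- pointwise bound on Ioi 0
  have hbound : ∀ s ∈ Set.Ioi (0:ℝ),
      Real.exp (-(2 * lam * s)) / (1 - Real.exp (-(2 * lam * (s + y)))) * (1 + s ^ m) ≤ g s := by
    intro s hs
    have hs0 : 0 < s := hs
    have hx : 0 < 2 * lam * (s + y) := by positivity
    set x : ℝ := 2 * lam * (s + y) with hxdef
    have hD : 0 < 1 - Real.exp (-x) := by
      have := Real.exp_lt_one_iff.mpr (by linarith : -x < 0)
      linarith
    have he : Real.exp (-x) ≤ 1/(1+x) := by
      rw [Real.exp_neg, one_div]
      have h1 : 1 + x ≤ Real.exp x := by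
        have := Real.add_one_le_exp x; linarith
      exact inv_anti₀ (by linarith) h1
    have hden : x/(1+x) ≤ 1 - Real.exp (-x) := by
      have h1 : 1 - 1/(1+x) = x/(1+x) := by field_simp; ring
      linarith
    have hDinv : (1 - Real.exp (-x))⁻¹ ≤ 1 + 1/x := by
      have h2 : (1 - Real.exp (-x))⁻¹ ≤ (x/(1+x))⁻¹ :=
        inv_anti₀ (by positivity) hden
      have h3 : (x/(1+x))⁻¹ = 1 + 1/x := by field_simp; ring
      linarith
    have hpoly : 1 + s ^ m ≤ A * Real.exp (lam * s) := by
      have h1 : s ^ m ≤ (m.factorial : ℝ) * Real.exp s := by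
        have h := Real.pow_div_factorial_le_exp (x := s) hs0.le m
        rw [div_le_iff₀ (by positivity : (0:ℝ) < (m.factorial : ℝ))] at h
        linarith
      have h2 : Real.exp s ≤ Real.exp (lam * s) :=
        Real.exp_le_exp.mpr (by nlinarith)
      have h3 : (1:ℝ) ≤ Real.exp (lam * s) := Real.one_le_exp (by positivity)
      have h4 : (0:ℝ) ≤ (m.factorial : ℝ) := by positivity
      rw [hA]; nlinarith
    have hexps : Real.exp (-(2 * lam * s)) * Real.exp (lam * s) = Real.exp (-(lam * s)) := by
      rw [← Real.exp_add]; ring_nf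
    have hge : 1 ≤ (1 + 1/x) * (1 - Real.exp (-x)) := by
      have h := mul_le_mul_of_nonneg_right hDinv hD.le
      rwa [inv_mul_cancel₀ hD.ne'] at h
    have step1 : Real.exp (-(2 * lam * s)) / (1 - Real.exp (-x)) * (1 + s ^ m)
        ≤ A * Real.exp (-(lam * s)) * (1 + 1/x) := by
      rw [div_mul_eq_mul_div, div_le_iff₀ hD]
      have hnn : 0 ≤ Real.exp (-(2 * lam * s)) := (Real.exp_pos _).le
      have e1 : Real.exp (-(2 * lam * s)) * (1 + s ^ m)
          ≤ Real.exp (-(2 * lam * s)) * (A * Real.exp (lam * s)) :=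
        mul_le_mul_of_nonneg_left hpoly hnn
      have e2 : Real.exp (-(2 * lam * s)) * (A * Real.exp (lam * s))
          = A * Real.exp (-(lam * s)) := by
        rw [show Real.exp (-(2 * lam * s)) * (A * Real.exp (lam * s))
            = A * (Real.exp (-(2 * lam * s)) * Real.exp (lam * s)) by ring, hexps]
      have hAe : 0 < A * Real.exp (-(lam * s)) := mul_pos hA0 (Real.exp_pos _)
      calc Real.exp (-(2 * lam * s)) * (1 + s ^ m)
          ≤ A * Real.exp (-(lam * s)) := by rw [← e2]; exact e1
        _ ≤ A * Real.exp (-(lam * s)) * ((1 + 1/x) * (1 - Real.exp (-x))) :=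
            le_mul_of_one_le_right hAe.le hge
        _ = A * Real.exp (-(lam * s)) * (1 + 1/x) * (1 - Real.exp (-x)) := by ring
    have step2 : Real.exp (-(lam * s)) / (s + y)
        ≤ (Set.Ioc (0:ℝ) (1/lam)).indicator (fun s => 1/(s+y)) s
          + lam * Real.exp (-(lam * s)) := by
      have hsy : 0 < s + y := by positivity
      rcases le_or_gt s (1/lam) with hcase | hcase
      · rw [Set.indicator_of_mem (Set.mem_Ioc.mpr ⟨hs0, hcase⟩)]
        have h1 : Real.exp (-(lam * s)) ≤ 1 :=
          Real.exp_le_one_iff.mpr (by nlinarith)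
        have h2 : Real.exp (-(lam * s)) / (s + y) ≤ 1 / (s + y) := by gcongr
        have h3 : 0 ≤ lam * Real.exp (-(lam * s)) := by positivity
        linarith
      · rw [Set.indicator_of_notMem (fun hmem => absurd hmem.2 hcase.not_ge), zero_add]
        have hil : 0 < 1/lam := by positivity
        have h1 : 1/(s+y) ≤ lam := by
          have h2 : 1/lam ≤ s + y := by linarith
          calc 1/(s+y) ≤ 1/(1/lam) := by gcongr
            _ = lam := one_div_one_div lam
        calc Real.exp (-(lam * s)) / (s + y) = Real.exp (-(lam * s)) * (1/(s+y)) := by ring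
          _ ≤ Real.exp (-(lam * s)) * lam :=
              mul_le_mul_of_nonneg_left h1 (Real.exp_pos _).le
          _ = lam * Real.exp (-(lam * s)) := by ring
    have step3 : A * Real.exp (-(lam * s)) * (1 + 1/x)
        = A * Real.exp (-(lam * s))
          + (A / (2 * lam)) * (Real.exp (-(lam * s)) / (s + y)) := by
      rw [hxdef]; field_simp
    have hc : 0 ≤ A / (2 * lam) := by positivity
    calc Real.exp (-(2 * lam * s)) / (1 - Real.exp (-x)) * (1 + s ^ m)
        ≤ A * Real.exp (-(lam * s)) * (1 + 1/x) := step1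
      _ = A * Real.exp (-(lam * s))
          + (A / (2 * lam)) * (Real.exp (-(lam * s)) / (s + y)) := step3
      _ ≤ g s := by
          rw [hgdef]
          have := mul_le_mul_of_nonneg_left step2 hc
          simp only
          linarith
  have hnonneg : ∀ s ∈ Set.Ioi (0:ℝ),
      0 ≤ Real.exp (-(2 * lam * s)) / (1 - Real.exp (-(2 * lam * (s + y)))) * (1 + s ^ m) := by
    intro s hs
    have hs0 : 0 < s := hs
    have hD : 0 < 1 - Real.exp (-(2 * lam * (s + y))) := by
      have := Real.exp_lt_one_iff.mpr (by nlinarith : -(2 * lam * (s + y)) < 0)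
      linarith
    have h1 : 0 ≤ 1 + s ^ m := by positivity
    positivity
  -- integral values
  have hI1 : (∫ s in Set.Ioi (0:ℝ), Real.exp (-(lam * s))) = 1/lam := by
    have h := integral_comp_mul_left_Ioi (fun u : ℝ => Real.exp (-u)) 0 hlam0
    simp only [mul_zero, integral_exp_neg_Ioi_zero, smul_eq_mul, mul_one] at h
    rw [h, one_div]
  have hI2 : (∫ s in Set.Ioi (0:ℝ),
      (Set.Ioc (0:ℝ) (1/lam)).indicator (fun s => 1/(s+y)) s) = L := by
    rw [setIntegral_indicator measurableSet_Ioc,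
      Set.inter_eq_self_of_subset_right Set.Ioc_subset_Ioi_self,
      ← intervalIntegral.integral_of_le (by positivity : (0:ℝ) ≤ 1/lam)]
    have h := intervalIntegral.integral_comp_add_right (a := 0) (b := 1/lam)
      (f := fun u : ℝ => 1/u) y
    rw [h, zero_add, integral_one_div (notMem_uIcc_of_lt hy (by positivity)), hLdef]
    congr 1
    field_simp
    ring
  have hle : (∫ s in Set.Ioi (0:ℝ),
      Real.exp (-(2 * lam * s)) / (1 - Real.exp (-(2 * lam * (s + y)))) * (1 + s ^ m))
      ≤ ∫ s in Set.Ioi (0:ℝ), g s := by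
    refine integral_mono_of_nonneg ?_ hg ?_
    · exact (ae_restrict_mem measurableSet_Ioi).mono fun s hs => hnonneg s hs
    · exact (ae_restrict_mem measurableSet_Ioi).mono fun s hs => hbound s hs
  have hgval : (∫ s in Set.Ioi (0:ℝ), g s)
      = A * (1/lam) + (A / (2 * lam)) * (L + lam * (1/lam)) := by
    rw [hgdef]
    rw [integral_add (hexp.const_mul A) (hsum2.const_mul _), integral_const_mul,
      integral_const_mul, integral_add hind.integrableOn (hexp.const_mul lam),
      integral_const_mul, hI1, hI2]
  have hfinal : A * (1/lam) + (A / (2 * lam)) * (L + lam * (1/lam))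
      ≤ 2 * A * (1/lam) * (1 + L) := by
    have ht : 0 < 1/lam := by positivity
    have e1 : lam * (1/lam) = 1 := by field_simp
    have e2 : A / (2 * lam) = A * (1/lam) / 2 := by rw [mul_one_div, div_div, mul_comm lam 2]
    rw [e1, e2]
    nlinarith [mul_nonneg (mul_nonneg hA0.le ht.le) hL0, mul_pos hA0 ht]
  calc (∫ s in Set.Ioi (0:ℝ),
      Real.exp (-(2 * lam * s)) / (1 - Real.exp (-(2 * lam * (s + y)))) * (1 + s ^ m))
      ≤ ∫ s in Set.Ioi (0:ℝ), g s := hle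
    _ = A * (1/lam) + (A / (2 * lam)) * (L + lam * (1/lam)) := hgval
    _ ≤ 2 * A * (1/lam) * (1 + L) := hfinal
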